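/- Let (k_n)_{n∈ℤ} be strictly positive integers, w_n = ⟨k_{n+1},k_{n+2},...⟩ and p_n defined by 1/(1+p_n) = ⟨k_n,k_{n-1},...⟩. Set a_l = -1/(w_l(1+p_l)). Then for all integers n ≥ m ≥ 0: (1/2) ≤ (w_{n-1}/w_{m-1})·(-1)^{m+n}·a_{n-1}···a_m ≤ 2. -/

import Mathlib

private lemma prod_Icc_top' {f : ℤ → ℝ} {a b : ℤ} (h : a ≤ b) :
    ∏ l ∈ Finset.Icc a b, f l = (∏ l ∈ Finset.Icc a (b-1), f l) * f b := by
  have he : Finset.Icc a b = insert b (Finset.Icc a (b-1)) := by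
    ext x; simp only [Finset.mem_Icc, Finset.mem_insert]; omega
  rw [he, Finset.prod_insert (by simp only [Finset.mem_Icc]; omega), mul_comm]

private lemma prod_Icc_bot' {f : ℤ → ℝ} {a b : ℤ} (h : a ≤ b) :
    ∏ l ∈ Finset.Icc a b, f l = f a * (∏ l ∈ Finset.Icc (a+1) b, f l) := by
  have he : Finset.Icc a b = insert a (Finset.Icc (a+1) b) := by
    ext x; simp only [Finset.mem_Icc, Finset.mem_insert]; omega
  rw [he, Finset.prod_insert (by simp only [Finset.mem_Icc]; omega)]

private lemma aux_cont (k : ℤ → ℤ) (hk : ∀ n, 0 < k n)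
    (w u : ℤ → ℝ)
    (hw01 : ∀ n, w n ∈ Set.Ioo (0:ℝ) 1)
    (hwrec : ∀ n, w n = 1 / ((k (n+1) : ℝ) + w (n+1)))
    (hu01 : ∀ n, u n ∈ Set.Ioo (0:ℝ) 1)
    (hurec : ∀ n, u n = 1 / ((k n : ℝ) + u (n-1)))
    (m : ℕ) : ∀ n : ℕ, m ≤ n → ∃ A B C D : ℝ,
      1 ≤ A ∧ 0 ≤ B ∧ B ≤ A ∧ 0 ≤ C ∧ C ≤ A ∧ 0 ≤ D ∧ D - C ≤ A - B ∧
      u ((n:ℤ)-1) * (A + B * u ((m:ℤ)-1)) = C + D * u ((m:ℤ)-1) ∧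
      (∏ l ∈ Finset.Icc (m:ℤ) ((n:ℤ)-1), u l) * (A + B * u ((m:ℤ)-1)) = 1 ∧
      (∏ l ∈ Finset.Icc ((m:ℤ)-1) ((n:ℤ)-2), w l) * (A + C * w ((n:ℤ)-1)) = 1 := by
  intro n hn
  induction n, hn using Nat.le_induction with
  | base =>
      refine ⟨1, 0, 0, 1, by norm_num, by norm_num, by norm_num, by norm_num, by norm_num,
        by norm_num, by norm_num, by ring, ?_, ?_⟩
      · rw [Finset.Icc_eq_empty (by omega)]; simp
      · rw [Finset.Icc_eq_empty (by omega)]; simp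
  | succ n hn ih =>
      obtain ⟨A, B, C, D, hA, hB, hBA, hC, hCA, hD, hDC, hmob, hPu, hQw⟩ := ih
      set K : ℝ := ((k (n:ℤ) : ℤ) : ℝ) with hKdef
      have hK1 : (1:ℝ) ≤ K := by
        have h1 : (1:ℤ) ≤ k (n:ℤ) := hk _
        rw [hKdef]; exact_mod_cast h1
      have hu0 := hu01 ((m:ℤ)-1)
      have huprev := hu01 ((n:ℤ)-1)
      have hun01 := hu01 (n:ℤ)
      have hwn01 := hw01 (n:ℤ)
      have hwprev := hw01 ((n:ℤ)-1)
      -- recursion facts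
      have hun : u (n:ℤ) * (K + u ((n:ℤ)-1)) = 1 := by
        have h := hurec (n:ℤ)
        have hne : K + u ((n:ℤ)-1) ≠ 0 := by nlinarith [huprev.1]
        rw [h, ← hKdef]; field_simp
      have hwn : w ((n:ℤ)-1) * (K + w (n:ℤ)) = 1 := by
        have h := hwrec ((n:ℤ)-1)
        rw [show (n:ℤ)-1+1 = (n:ℤ) by ring] at h
        have hne : K + w (n:ℤ) ≠ 0 := by nlinarith [hwn01.1]
        rw [h, ← hKdef]; field_simp
      have hcast1 : ((n+1:ℕ):ℤ) - 1 = (n:ℤ) := by push_cast; ring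
      have hcast2 : ((n+1:ℕ):ℤ) - 2 = (n:ℤ) - 1 := by push_cast; ring
      refine ⟨K*A + C, K*B + D, A, B, ?_, ?_, ?_, ?_, ?_, ?_, ?_, ?_, ?_, ?_⟩
      · nlinarith
      · nlinarith
      · nlinarith
      · linarith
      · nlinarith
      · exact hB
      · nlinarith
      · -- Möbius invariant
        rw [hcast1]
        have e : K*A + C + (K*B + D) * u ((m:ℤ)-1)
            = (K + u ((n:ℤ)-1)) * (A + B * u ((m:ℤ)-1)) := by
          linear_combination -hmob
        rw [e]
        calc u (n:ℤ) * ((K + u ((n:ℤ)-1)) * (A + B * u ((m:ℤ)-1)))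
            = (u (n:ℤ) * (K + u ((n:ℤ)-1))) * (A + B * u ((m:ℤ)-1)) := by ring
          _ = A + B * u ((m:ℤ)-1) := by rw [hun]; ring
      · -- u product
        rw [hcast1, prod_Icc_top' (by exact_mod_cast hn)]
        have e : K*A + C + (K*B + D) * u ((m:ℤ)-1)
            = (K + u ((n:ℤ)-1)) * (A + B * u ((m:ℤ)-1)) := by
          linear_combination -hmob
        rw [e]
        calc (∏ l ∈ Finset.Icc (m:ℤ) ((n:ℤ)-1), u l) * u (n:ℤ) *
              ((K + u ((n:ℤ)-1)) * (A + B * u ((m:ℤ)-1)))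
            = ((∏ l ∈ Finset.Icc (m:ℤ) ((n:ℤ)-1), u l) * (A + B * u ((m:ℤ)-1))) *
              (u (n:ℤ) * (K + u ((n:ℤ)-1))) := by ring
          _ = 1 := by rw [hPu, hun]; ring
      · -- w product
        rw [hcast1, hcast2, prod_Icc_top' (by omega)]
        calc (∏ l ∈ Finset.Icc ((m:ℤ)-1) ((n:ℤ)-1-1), w l) * w ((n:ℤ)-1) *
              (K*A + C + A * w (n:ℤ))
            = ((∏ l ∈ Finset.Icc ((m:ℤ)-1) ((n:ℤ)-2), w l)) *
              (A * (w ((n:ℤ)-1) * (K + w (n:ℤ))) + C * w ((n:ℤ)-1)) := by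
              rw [show (n:ℤ)-1-1 = (n:ℤ)-2 by ring]; ring
          _ = (∏ l ∈ Finset.Icc ((m:ℤ)-1) ((n:ℤ)-2), w l) * (A + C * w ((n:ℤ)-1)) := by
              rw [hwn]; ring
          _ = 1 := hQw

theorem stmt_10 (k : ℤ → ℤ) (hk : ∀ n, 0 < k n)
    (w u p : ℤ → ℝ)
    (hw01 : ∀ n, w n ∈ Set.Ioo (0:ℝ) 1)
    (hwrec : ∀ n, w n = 1 / ((k (n+1) : ℝ) + w (n+1)))
    (hu01 : ∀ n, u n ∈ Set.Ioo (0:ℝ) 1)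
    (hurec : ∀ n, u n = 1 / ((k n : ℝ) + u (n-1)))
    (hp : ∀ n, 1 / (1 + p n) = u n)
    (a : ℤ → ℝ) (ha : ∀ l, a l = -(1 / (w l * (1 + p l))))
    (m n : ℕ) (hmn : m ≤ n) :
    1/2 ≤ w ((n:ℤ)-1) / w ((m:ℤ)-1) * (-1:ℝ)^(m+n) *
        ∏ l ∈ Finset.Icc (m:ℤ) ((n:ℤ)-1), a l ∧
    w ((n:ℤ)-1) / w ((m:ℤ)-1) * (-1:ℝ)^(m+n) *
        ∏ l ∈ Finset.Icc (m:ℤ) ((n:ℤ)-1), a l ≤ 2 := by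
  obtain ⟨A, B, C, D, hA, hB, hBA, hC, hCA, hD, hDC, hmob, hPu, hQw⟩ :=
    aux_cont k hk w u hw01 hwrec hu01 hurec m n hmn
  have hu0 := hu01 ((m:ℤ)-1)
  have hw1 := hw01 ((n:ℤ)-1)
  have hw0 := hw01 ((m:ℤ)-1)
  -- a l = -(u l / w l)
  have ha' : ∀ l, a l = -(u l / w l) := by
    intro l
    rw [ha l, mul_comm, ← div_div, hp l]
  -- product of a
  have hcard : (Finset.Icc (m:ℤ) ((n:ℤ)-1)).card = n - m := by
    rw [Int.card_Icc]; omega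
  have hprodA : (∏ l ∈ Finset.Icc (m:ℤ) ((n:ℤ)-1), a l)
      = (-1:ℝ)^(n-m) * ((∏ l ∈ Finset.Icc (m:ℤ) ((n:ℤ)-1), u l) /
          (∏ l ∈ Finset.Icc (m:ℤ) ((n:ℤ)-1), w l)) := by
    rw [← Finset.prod_div_distrib, ← hcard, ← Finset.prod_const]
    rw [← Finset.prod_mul_distrib]
    exact Finset.prod_congr rfl (fun l _ => by rw [ha' l]; ring)
  have hsign : (-1:ℝ)^(m+n) * (-1:ℝ)^(n-m) = 1 := by
    rw [← pow_add, show m+n+(n-m) = 2*n by omega, pow_mul]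
    norm_num
  -- telescoping for w
  have htel : w ((m:ℤ)-1) * (∏ l ∈ Finset.Icc (m:ℤ) ((n:ℤ)-1), w l)
      = w ((n:ℤ)-1) * (∏ l ∈ Finset.Icc ((m:ℤ)-1) ((n:ℤ)-2), w l) := by
    have h1 : ∏ l ∈ Finset.Icc ((m:ℤ)-1) ((n:ℤ)-1), w l
        = (∏ l ∈ Finset.Icc ((m:ℤ)-1) ((n:ℤ)-1-1), w l) * w ((n:ℤ)-1) :=
      prod_Icc_top' (by omega)
    have h2 : ∏ l ∈ Finset.Icc ((m:ℤ)-1) ((n:ℤ)-1), w l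
        = w ((m:ℤ)-1) * (∏ l ∈ Finset.Icc ((m:ℤ)-1+1) ((n:ℤ)-1), w l) :=
      prod_Icc_bot' (by omega)
    rw [show (m:ℤ)-1+1 = (m:ℤ) by ring] at h2
    rw [show (n:ℤ)-1-1 = (n:ℤ)-2 by ring] at h1
    rw [← h2, h1]; ring
  -- nonvanishing
  have hwne : ∀ l ∈ Finset.Icc (m:ℤ) ((n:ℤ)-1), w l ≠ 0 :=
    fun l _ => ne_of_gt (hw01 l).1
  have hPwne : (∏ l ∈ Finset.Icc (m:ℤ) ((n:ℤ)-1), w l) ≠ 0 :=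
    Finset.prod_ne_zero_iff.mpr hwne
  have hQwne : (∏ l ∈ Finset.Icc ((m:ℤ)-1) ((n:ℤ)-2), w l) ≠ 0 := by
    intro h0
    rw [h0, mul_zero] at htel
    exact (mul_ne_zero (ne_of_gt hw0.1) hPwne) htel
  have hdpos : 0 < A + B * u ((m:ℤ)-1) := by nlinarith [hu0.1]
  have hepos : 0 < A + C * w ((n:ℤ)-1) := by nlinarith [hw1.1]
  -- the closed form
  have hT : w ((n:ℤ)-1) / w ((m:ℤ)-1) * (-1:ℝ)^(m+n) *
        ∏ l ∈ Finset.Icc (m:ℤ) ((n:ℤ)-1), a l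
      = (A + C * w ((n:ℤ)-1)) / (A + B * u ((m:ℤ)-1)) := by
    rw [hprodA]
    have : w ((n:ℤ)-1) / w ((m:ℤ)-1) * (-1:ℝ)^(m+n) *
        ((-1:ℝ)^(n-m) * ((∏ l ∈ Finset.Icc (m:ℤ) ((n:ℤ)-1), u l) /
          (∏ l ∈ Finset.Icc (m:ℤ) ((n:ℤ)-1), w l)))
        = ((-1:ℝ)^(m+n) * (-1:ℝ)^(n-m)) *
          (w ((n:ℤ)-1) * (∏ l ∈ Finset.Icc (m:ℤ) ((n:ℤ)-1), u l) /
           (w ((m:ℤ)-1) * (∏ l ∈ Finset.Icc (m:ℤ) ((n:ℤ)-1), w l))) := by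
      field_simp
    rw [this, hsign, one_mul, htel]
    rw [mul_div_mul_left _ _ (ne_of_gt hw1.1)]
    rw [div_eq_div_iff hQwne (ne_of_gt hdpos)]
    rw [hPu, mul_comm]
    exact hQw.symm
  rw [hT] at *
  constructor
  · rw [le_div_iff₀ hdpos]
    nlinarith [mul_nonneg hC hw1.1.le, mul_le_of_le_one_right hB hu0.2.le]
  · rw [div_le_iff₀ hdpos]
    nlinarith [mul_le_of_le_one_right hC hw1.2.le, mul_nonneg hB hu0.1.le]
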